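/- Let (X,ρ,W) be a uniformly convex hyperbolic space with modulus η such that η(r,ε) = ε·η̃(r,ε) where η̃ is non-decreasing in ε (for fixed r) and η is non-increasing in r (for fixed ε). Let (x_n) be the Krasnoselski–Mann iteration of a nonexpansive T : C → C on a nonempty convex C with coefficients λ_n ∈ [0,1]. Suppose x,y ∈ C, n ∈ ℕ, and δ, a > 0 satisfy ρ(x_n,y) + ρ(y,Ty) ≤ δ and a ≤ ρ(x_n, T x_n). Then ρ(x_{n+1}, y) ≤ ρ(x_n, y) + ρ(y, Ty) − 2aλ_n(1−λ_n)·η̃(δ, a/δ). -/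

import Mathlib

section Aux
variable {X : Type*} [MetricSpace X] (W : X → X → ℝ → X)

lemma hb_W_zero
    (W1 : ∀ x y z : X, ∀ l : ℝ, l ∈ Set.Icc (0:ℝ) 1 →
      dist z (W x y l) ≤ (1 - l) * dist z x + l * dist z y)
    (x y : X) : W x y 0 = x := by
  have h := W1 x y x 0 (by norm_num)
  simp at h
  exact h.symm

lemma hb_W_one
    (W1 : ∀ x y z : X, ∀ l : ℝ, l ∈ Set.Icc (0:ℝ) 1 →
      dist z (W x y l) ≤ (1 - l) * dist z x + l * dist z y)
    (x y : X) : W x y 1 = y := by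
  have h := W1 x y y 1 (by norm_num)
  simp at h
  exact h.symm

/-- Uniqueness of metric midpoints in a uniformly convex hyperbolic space. -/
lemma hb_mid_unique (η : ℝ → ℝ → ℝ)
    (hη : ∀ r ε : ℝ, 0 < r → ε ∈ Set.Ioc (0:ℝ) 2 → η r ε ∈ Set.Ioc (0:ℝ) 1)
    (hmod : ∀ r ε : ℝ, ∀ a u v : X, 0 < r → ε ∈ Set.Ioc (0:ℝ) 2 →
      dist u a ≤ r → dist v a ≤ r → ε * r ≤ dist u v →
      dist (W u v (1/2)) a ≤ (1 - η r ε) * r)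
    (A B P Q : X)
    (hPA : dist P A ≤ dist A B / 2) (hPB : dist P B ≤ dist A B / 2)
    (hQA : dist Q A ≤ dist A B / 2) (hQB : dist Q B ≤ dist A B / 2) : P = Q := by
  rcases eq_or_lt_of_le (dist_nonneg : (0:ℝ) ≤ dist A B) with h0 | h0
  · have hP : P = A := dist_le_zero.mp (by linarith)
    have hQ : Q = A := dist_le_zero.mp (by linarith)
    rw [hP, hQ]
  · by_contra hne
    have ht : 0 < dist P Q := dist_pos.mpr hne
    set e := dist A B / 2 with he_def
    have he : 0 < e := by positivity
    set ε := dist P Q / e with hε_def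
    have hε2 : ε ≤ 2 := by
      rw [div_le_iff₀ he]
      have h1 := dist_triangle P A Q
      have h2 : dist A Q = dist Q A := dist_comm A Q
      linarith
    have hεpos : 0 < ε := div_pos ht he
    have hmem : ε ∈ Set.Ioc (0:ℝ) 2 := ⟨hεpos, hε2⟩
    have hre : ε * e ≤ dist P Q := le_of_eq (div_mul_cancel₀ _ (ne_of_gt he))
    have h1 := hmod e ε A P Q he hmem hPA hQA hre
    have h2 := hmod e ε B P Q he hmem hPB hQB hre
    have hp := (hη e ε he hmem).1
    have htr := dist_triangle A (W P Q (1/2)) B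
    have hc : dist A (W P Q (1/2)) = dist (W P Q (1/2)) A := dist_comm _ _
    nlinarith [mul_pos hp he]

/-- Interpolation step: the W-point at (α+β)/2 satisfies the midpoint convexity bound. -/
lemma hb_step_mid (η : ℝ → ℝ → ℝ)
    (W1 : ∀ x y z : X, ∀ l : ℝ, l ∈ Set.Icc (0:ℝ) 1 →
      dist z (W x y l) ≤ (1 - l) * dist z x + l * dist z y)
    (W2 : ∀ x y : X, ∀ l l' : ℝ, l ∈ Set.Icc (0:ℝ) 1 → l' ∈ Set.Icc (0:ℝ) 1 →
      dist (W x y l) (W x y l') = |l - l'| * dist x y)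
    (hη : ∀ r ε : ℝ, 0 < r → ε ∈ Set.Ioc (0:ℝ) 2 → η r ε ∈ Set.Ioc (0:ℝ) 1)
    (hmod : ∀ r ε : ℝ, ∀ a u v : X, 0 < r → ε ∈ Set.Ioc (0:ℝ) 2 →
      dist u a ≤ r → dist v a ≤ r → ε * r ≤ dist u v →
      dist (W u v (1/2)) a ≤ (1 - η r ε) * r)
    (p u v : X) (α β : ℝ) (h0 : 0 ≤ α) (hαβ : α ≤ β) (hβ : β ≤ 1) :
    dist p (W u v ((α+β)/2)) ≤ (dist p (W u v α) + dist p (W u v β)) / 2 := by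
  have hαm : α ∈ Set.Icc (0:ℝ) 1 := ⟨h0, le_trans hαβ hβ⟩
  have hβm : β ∈ Set.Icc (0:ℝ) 1 := ⟨le_trans h0 hαβ, hβ⟩
  have hmm : (α+β)/2 ∈ Set.Icc (0:ℝ) 1 := ⟨by linarith, by linarith⟩
  set A' := W u v α
  set B' := W u v β
  set z := W u v ((α+β)/2)
  have dzA : dist z A' = (β - α)/2 * dist u v := by
    have := W2 u v ((α+β)/2) α hmm hαm
    rwa [show (α+β)/2 - α = (β-α)/2 by ring, abs_of_nonneg (by linarith)] at this
  have dzB : dist z B' = (β - α)/2 * dist u v := by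
    have := W2 u v ((α+β)/2) β hmm hβm
    rwa [show (α+β)/2 - β = -((β-α)/2) by ring, abs_neg, abs_of_nonneg (by linarith)] at this
  have dAB : dist A' B' = (β - α) * dist u v := by
    have := W2 u v α β hαm hβm
    rwa [show α - β = -(β-α) by ring, abs_neg, abs_of_nonneg (by linarith)] at this
  have dQA : dist (W A' B' (1/2)) A' = dist A' B' / 2 := by
    have := W2 A' B' (1/2) 0 (by norm_num) (by norm_num)
    rw [hb_W_zero W W1] at this
    rw [this, show |(1:ℝ)/2 - 0| = 1/2 by norm_num]; ring
  have dQB : dist (W A' B' (1/2)) B' = dist A' B' / 2 := by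
    have := W2 A' B' (1/2) 1 (by norm_num) (by norm_num)
    rw [hb_W_one W W1] at this
    rw [this, show |(1:ℝ)/2 - 1| = 1/2 by norm_num]; ring
  have hzq : z = W A' B' (1/2) := by
    apply hb_mid_unique W η hη hmod A' B' z (W A' B' (1/2))
    · exact le_of_eq (by rw [dzA, dAB]; ring)
    · exact le_of_eq (by rw [dzB, dAB]; ring)
    · rw [dQA]
    · rw [dQB]
  have h := W1 A' B' p (1/2) (by norm_num)
  rw [← hzq] at h
  linarith

/-- Key convexity estimate: for `λ ≤ 1/2`,
`dist p (W u v λ) ≤ (1-2λ) dist p u + 2λ dist p (W u v (1/2))`. -/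
lemma hb_key (η : ℝ → ℝ → ℝ)
    (W1 : ∀ x y z : X, ∀ l : ℝ, l ∈ Set.Icc (0:ℝ) 1 →
      dist z (W x y l) ≤ (1 - l) * dist z x + l * dist z y)
    (W2 : ∀ x y : X, ∀ l l' : ℝ, l ∈ Set.Icc (0:ℝ) 1 → l' ∈ Set.Icc (0:ℝ) 1 →
      dist (W x y l) (W x y l') = |l - l'| * dist x y)
    (hη : ∀ r ε : ℝ, 0 < r → ε ∈ Set.Ioc (0:ℝ) 2 → η r ε ∈ Set.Ioc (0:ℝ) 1)
    (hmod : ∀ r ε : ℝ, ∀ a u v : X, 0 < r → ε ∈ Set.Ioc (0:ℝ) 2 →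
      dist u a ≤ r → dist v a ≤ r → ε * r ≤ dist u v →
      dist (W u v (1/2)) a ≤ (1 - η r ε) * r)
    (p u v : X) (l : ℝ) (hl0 : 0 ≤ l) (hl2 : l ≤ 1/2) :
    dist p (W u v l) ≤ (1 - 2*l) * dist p u + 2*l * dist p (W u v (1/2)) := by
  set D := dist u v with hD
  set A := dist p u with hA
  set M := dist p (W u v (1/2)) with hM
  have hDn : 0 ≤ D := dist_nonneg
  have hAn : 0 ≤ A := dist_nonneg
  have hMn : 0 ≤ M := dist_nonneg
  -- dyadic case
  have dy : ∀ n : ℕ, ∀ k : ℕ, k ≤ 2^n →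
      dist p (W u v ((k:ℝ)/2^(n+1))) ≤ (1 - 2*((k:ℝ)/2^(n+1))) * A + 2*((k:ℝ)/2^(n+1)) * M := by
    intro n
    induction n with
    | zero =>
      intro k hk
      interval_cases k
      · norm_num [hb_W_zero W W1, ← hA]
      · norm_num [← hM]
    | succ n ih =>
      intro k hk
      by_cases hcase : k ≤ 2^n
      · have h2l := ih k hcase
        have hβle : (k:ℝ)/2^(n+1) ≤ 1 := by
          rw [div_le_one (by positivity)]
          have : (k:ℝ) ≤ 2^n := by exact_mod_cast hcase
          have h2 : (2:ℝ)^n ≤ 2^(n+1) := by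
            apply pow_le_pow_right₀ <;> norm_num
          linarith
        have hmid := hb_step_mid W η W1 W2 hη hmod p u v 0 ((k:ℝ)/2^(n+1))
          le_rfl (by positivity) hβle
        rw [hb_W_zero W W1, show ((0:ℝ) + (k:ℝ)/2^(n+1))/2 = (k:ℝ)/2^(n+1+1) by ring] at hmid
        rw [← hA] at hmid
        have heq : (k:ℝ)/2^(n+1+1) = ((k:ℝ)/2^(n+1))/2 := by ring
        rw [heq] at hmid ⊢
        linarith
      · push_neg at hcase
        have hk2 : 2^n ≤ k := hcase.le
        have hk' : k - 2^n ≤ 2^n := by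
          have : k ≤ 2^(n+1) := hk
          omega
        have hcast : ((k - 2^n : ℕ) : ℝ) = (k:ℝ) - 2^n := by
          push_cast [Nat.cast_sub hk2]; ring
        have hα := ih (k - 2^n) hk'
        set α : ℝ := ((k - 2^n : ℕ):ℝ)/2^(n+1) with hαdef
        have hα0 : 0 ≤ α := by positivity
        have hαhalf : α ≤ 1/2 := by
          rw [hαdef, div_le_iff₀ (by positivity)]
          have h1 : ((k - 2^n:ℕ):ℝ) ≤ 2^n := by exact_mod_cast hk'
          have : (1:ℝ)/2 * 2^(n+1) = 2^n := by
            rw [pow_succ]; ring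
          linarith
        have hmid := hb_step_mid W η W1 W2 hη hmod p u v α (1/2) hα0 hαhalf (by norm_num)
        have heq : (α + 1/2)/2 = (k:ℝ)/2^(n+1+1) := by
          rw [hαdef, hcast, pow_succ]
          field_simp
          ring
        rw [heq, ← hM] at hmid
        calc dist p (W u v ((k:ℝ)/2^(n+1+1)))
            ≤ (dist p (W u v α) + M) / 2 := hmid
          _ ≤ (((1 - 2*α) * A + 2*α*M) + M)/2 := by linarith
          _ = (1 - 2*((k:ℝ)/2^(n+1+1))) * A + 2*((k:ℝ)/2^(n+1+1)) * M := by
              rw [hαdef, hcast]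
              have h2 : (2:ℝ)^(n+1+1) = 2 * 2^(n+1) := by rw [pow_succ]; ring
              field_simp
              ring
  -- approximation of arbitrary l by dyadics
  have happrox : ∀ n : ℕ, dist p (W u v l) ≤
      (1 - 2*l) * A + 2*l*M + (2*A + 2*M + D) * (1/2^(n+1)) := by
    intro n
    set k := ⌊l * 2^(n+1)⌋₊ with hkdef
    have hkle : k ≤ 2^n := by
      have h1 : l * 2^(n+1) ≤ ((2^n : ℕ):ℝ) := by
        push_cast
        have : l * 2^(n+1) ≤ (1/2) * 2^(n+1) := by
          apply mul_le_mul_of_nonneg_right hl2 (by positivity)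
        rw [pow_succ] at this ⊢
        linarith
      calc k ≤ ⌊((2^n : ℕ):ℝ)⌋₊ := Nat.floor_le_floor h1
        _ = 2^n := Nat.floor_natCast _
    set q : ℝ := (k:ℝ)/2^(n+1) with hqdef
    have hq0 : 0 ≤ q := by positivity
    have hqle : q ≤ l := by
      rw [hqdef, div_le_iff₀ (by positivity)]
      exact Nat.floor_le (by positivity)
    have hlq : l - q ≤ 1/2^(n+1) := by
      have hfl := Nat.lt_floor_add_one (l * 2^(n+1))
      have hpow : (0:ℝ) < 2^(n+1) := by positivity
      rw [hqdef, sub_le_iff_le_add, ← add_div, le_div_iff₀ hpow]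
      rw [← hkdef] at hfl
      linarith
    have hq1 : q ≤ 1 := le_trans hqle (by linarith)
    have hdyq := dy n k hkle
    rw [← hqdef] at hdyq
    have hLip : dist p (W u v l) ≤ dist p (W u v q) + (l - q) * D := by
      have htr := dist_triangle p (W u v q) (W u v l)
      have hw2 := W2 u v q l ⟨hq0, hq1⟩ ⟨hl0, by linarith⟩
      rw [show |q - l| = l - q by rw [abs_sub_comm]; exact abs_of_nonneg (by linarith)] at hw2
      rw [hw2] at htr
      exact htr
    have hb1 : (l - q) * D ≤ (1/2^(n+1)) * D := mul_le_mul_of_nonneg_right hlq hDn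
    have hb2 : 2*(q - l)*A ≤ 0 := by
      apply mul_nonpos_of_nonpos_of_nonneg _ hAn
      linarith
    have hb3 : 2*(l - q)*M ≤ 2*(1/2^(n+1))*M := by
      apply mul_le_mul_of_nonneg_right _ hMn
      linarith
    nlinarith
  -- take the limit
  apply le_of_forall_pos_le_add
  intro ε hε
  obtain ⟨n, hn⟩ := pow_unbounded_of_one_lt ((2*A + 2*M + D)/ε) (by norm_num : (1:ℝ) < 2)
  have hKn : 0 ≤ 2*A + 2*M + D := by linarith
  have h2n : (0:ℝ) < 2^n := by positivity
  have hlt : (2*A + 2*M + D) * (1/2^(n+1)) < ε := by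
    rw [div_lt_iff₀ hε] at hn
    have h1 : (2*A+2*M+D) * (1/2^(n+1)) ≤ (2*A+2*M+D) * (1/2^n) := by
      apply mul_le_mul_of_nonneg_left _ hKn
      apply div_le_div_of_nonneg_left (by norm_num) h2n
      apply pow_le_pow_right₀ <;> norm_num
    have h2 : (2*A+2*M+D) * (1/2^n) < ε := by
      rw [mul_one_div, div_lt_iff₀ h2n]
      linarith [mul_pos hε h2n]
    linarith
  have := happrox n
  linarith

end Aux



theorem stmt_9
    {X : Type*} [MetricSpace X]
    (W : X → X → ℝ → X)
    (W1 : ∀ x y z : X, ∀ l : ℝ, l ∈ Set.Icc (0:ℝ) 1 →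
      dist z (W x y l) ≤ (1 - l) * dist z x + l * dist z y)
    (W2 : ∀ x y : X, ∀ l l' : ℝ, l ∈ Set.Icc (0:ℝ) 1 → l' ∈ Set.Icc (0:ℝ) 1 →
      dist (W x y l) (W x y l') = |l - l'| * dist x y)
    (W3 : ∀ x y : X, ∀ l : ℝ, l ∈ Set.Icc (0:ℝ) 1 → W x y l = W y x (1 - l))
    (W4 : ∀ x y z w : X, ∀ l : ℝ, l ∈ Set.Icc (0:ℝ) 1 →
      dist (W x z l) (W y w l) ≤ (1 - l) * dist x y + l * dist z w)
    (η : ℝ → ℝ → ℝ)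
    (hη : ∀ r ε : ℝ, 0 < r → ε ∈ Set.Ioc (0:ℝ) 2 → η r ε ∈ Set.Ioc (0:ℝ) 1)
    (hmod : ∀ r ε : ℝ, ∀ a u v : X, 0 < r → ε ∈ Set.Ioc (0:ℝ) 2 →
      dist u a ≤ r → dist v a ≤ r → ε * r ≤ dist u v →
      dist (W u v (1/2)) a ≤ (1 - η r ε) * r)
    (hdec : ∀ r s ε : ℝ, 0 < r → r ≤ s → ε ∈ Set.Ioc (0:ℝ) 2 → η s ε ≤ η r ε)
    (ηt : ℝ → ℝ → ℝ)
    (hfact : ∀ r ε : ℝ, 0 < r → ε ∈ Set.Ioc (0:ℝ) 2 → η r ε = ε * ηt r ε)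
    (hinc : ∀ r ε ε' : ℝ, 0 < r → ε ∈ Set.Ioc (0:ℝ) 2 → ε' ∈ Set.Ioc (0:ℝ) 2 →
      ε ≤ ε' → ηt r ε ≤ ηt r ε')
    (C : Set X) (hCne : C.Nonempty)
    (hconv : ∀ u ∈ C, ∀ v ∈ C, ∀ l : ℝ, l ∈ Set.Icc (0:ℝ) 1 → W u v l ∈ C)
    (T : X → X) (hT : ∀ u ∈ C, T u ∈ C)
    (hTne : ∀ u ∈ C, ∀ v ∈ C, dist (T u) (T v) ≤ dist u v)
    (lam : ℕ → ℝ) (hlam : ∀ n, lam n ∈ Set.Icc (0:ℝ) 1)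
    (x : X) (hx : x ∈ C)
    (xseq : ℕ → X) (hx0 : xseq 0 = x)
    (hxs : ∀ n, xseq (n + 1) = W (xseq n) (T (xseq n)) (lam n))
    : ∀ y ∈ C, ∀ n : ℕ, ∀ δ a : ℝ, 0 < δ → 0 < a →
      dist (xseq n) y + dist y (T y) ≤ δ →
      a ≤ dist (xseq n) (T (xseq n)) →
      dist (xseq (n + 1)) y ≤
        dist (xseq n) y + dist y (T y) - 2 * a * lam n * (1 - lam n) * ηt δ (a / δ) := by

  intro y hy n δ a hδ ha hsum hdista
  -- xseq stays in C
  have hmem : ∀ m, xseq m ∈ C := by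
    intro m
    induction m with
    | zero => rw [hx0]; exact hx
    | succ m ih => rw [hxs]; exact hconv _ ih _ (hT _ ih) _ (hlam m)
  set u := xseq n with hu_def
  set v := T (xseq n) with hv_def
  have hu : u ∈ C := hmem n
  have hd1 : dist v y ≤ dist u y + dist y (T y) := by
    have h1 := dist_triangle v (T y) y
    have h2 : dist v (T y) ≤ dist u y := hTne u hu y hy
    linarith [dist_comm (T y) y]
  set s := dist u y + dist y (T y) with hs_def
  have hbnn : 0 ≤ dist y (T y) := dist_nonneg
  have hdnn : 0 ≤ dist u y := dist_nonneg
  have huv2 : dist u v ≤ 2 * s := by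
    have h1 := dist_triangle u y v
    have h2 : dist y v = dist v y := dist_comm y v
    linarith
  have ha2s : a ≤ 2 * s := le_trans hdista huv2
  have hspos : 0 < s := by linarith
  have hsδ : s ≤ δ := hsum
  have hεs : a / s ∈ Set.Ioc (0:ℝ) 2 := ⟨div_pos ha hspos, by rw [div_le_iff₀ hspos]; linarith⟩
  have hεδ : a / δ ∈ Set.Ioc (0:ℝ) 2 := ⟨div_pos ha hδ, by rw [div_le_iff₀ hδ]; linarith⟩
  have hmb := hmod s (a/s) y u v hspos hεs (by linarith) hd1
    (by rw [div_mul_cancel₀ _ (ne_of_gt hspos)]; exact hdista)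
  -- rewrite the modulus bound
  have hfs := hfact s (a/s) hspos hεs
  have hmb2 : dist (W u v (1/2)) y ≤ s - a * ηt s (a/s) := by
    rw [hfs] at hmb
    have : (1 - a/s * ηt s (a/s)) * s = s - a * ηt s (a/s) := by
      field_simp
    linarith [hmb, this.le, this.ge]
  -- monotonicity chain for ηt
  have hchain1 : ηt s (a/δ) ≤ ηt s (a/s) :=
    hinc s (a/δ) (a/s) hspos hεδ hεs (div_le_div_of_nonneg_left ha.le hspos hsδ)
  have hchain2 : ηt δ (a/δ) ≤ ηt s (a/δ) := by
    have h1 := hdec s δ (a/δ) hspos hsδ hεδ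
    rw [hfact s (a/δ) hspos hεδ, hfact δ (a/δ) hδ hεδ] at h1
    exact le_of_mul_le_mul_left h1 (div_pos ha hδ)
  have hc : 0 < ηt δ (a/δ) := by
    have h1 := (hη δ (a/δ) hδ hεδ).1
    rw [hfact δ (a/δ) hδ hεδ] at h1
    nlinarith [h1, div_pos ha hδ]
  have hmY : dist (W u v (1/2)) y ≤ s - a * ηt δ (a/δ) := by
    have : a * ηt δ (a/δ) ≤ a * ηt s (a/s) := by
      apply mul_le_mul_of_nonneg_left _ ha.le
      linarith
    linarith
  set c := a * ηt δ (a/δ) with hc_def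
  have hcpos : 0 < c := mul_pos ha hc
  rw [hxs n, ← hu_def, ← hv_def]
  obtain ⟨hl0n, hl1n⟩ := hlam n
  rcases le_or_gt (lam n) (1/2) with hhalf | hhalf
  · have hk := hb_key W η W1 W2 hη hmod y u v (lam n) hl0n hhalf
    rw [dist_comm (W u v (lam n)) y]
    have hyu : dist y u = dist u y := dist_comm y u
    have hym : dist y (W u v (1/2)) = dist (W u v (1/2)) y := dist_comm _ _
    rw [hyu, hym] at hk
    have h1 : (0:ℝ) ≤ 1 - 2 * lam n := by linarith
    nlinarith [mul_nonneg h1 hbnn, mul_nonneg (mul_self_nonneg (lam n)) hcpos.le,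
      mul_le_mul_of_nonneg_left hmY (by linarith : (0:ℝ) ≤ 2 * lam n)]
  · have hW3 := W3 u v (lam n) ⟨hl0n, hl1n⟩
    have hm3 := W3 u v (1/2) (by norm_num)
    norm_num at hm3
    have hk := hb_key W η W1 W2 hη hmod y v u (1 - lam n) (by linarith) (by linarith)
    rw [← hm3] at hk
    rw [hW3, dist_comm (W v u (1 - lam n)) y]
    have hyv : dist y v = dist v y := dist_comm y v
    have hym : dist y (W u v (1/2)) = dist (W u v (1/2)) y := dist_comm _ _
    rw [hyv, hym] at hk
    have h1 : (0:ℝ) ≤ 2 * lam n - 1 := by linarith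
    nlinarith [mul_nonneg h1 (by linarith [hd1] : (0:ℝ) ≤ s - dist v y),
      mul_nonneg (mul_self_nonneg (1 - lam n)) hcpos.le,
      mul_le_mul_of_nonneg_left hmY (by linarith : (0:ℝ) ≤ 2 * (1 - lam n))]
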